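/- Let (X,d) be a non-connected Robinson space with d(x,y) > 0 for all distinct x,y ∈ X, and suppose every connected component of G_{δ*} has diameter at most δ*. Then a total order < on X is a compatible order of (X,d) if and only if < is the composition of some total order on the set P of connected components of G_{δ*} with a choice, for each component S ∈ P, of a compatible order of the subspace (S,d). -/

import Mathlib

structure Dissim (X : Type*) where
  d : X → X → ℝ
  symm : ∀ x y, d x y = d y x
  nonneg : ∀ x y, 0 ≤ d x y
  self : ∀ x, d x x = 0

variable {X : Type*}

def Compatible (D : Dissim X) (lt : X → X → Prop) : Prop :=
  ∀ x y z : X, lt x y → lt y z → D.d x y ≤ D.d x z ∧ D.d y z ≤ D.d x z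

def IsCompatOrder (D : Dissim X) (lt : X → X → Prop) : Prop :=
  IsStrictTotalOrder X lt ∧ Compatible D lt

def Robinson (D : Dissim X) : Prop :=
  ∃ lt : X → X → Prop, IsCompatOrder D lt

def IsMmodule (D : Dissim X) (M : Set X) : Prop :=
  ∀ z ∉ M, ∀ x ∈ M, ∀ y ∈ M, D.d z x = D.d z y

def IsInterval (lt : X → X → Prop) (I : Set X) : Prop :=
  ∀ a b c : X, lt a b → lt b c → a ∈ I → c ∈ I → b ∈ I

def IsBlock (D : Dissim X) (Y : Set X) : Prop :=
  ∀ lt : X → X → Prop, IsCompatOrder D lt → IsInterval lt Y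

noncomputable def diam (D : Dissim X) (Y : Set X) : ℝ :=
  sSup (Set.image2 D.d Y Y)

def Gdelta (D : Dissim X) (δ : ℝ) : SimpleGraph X where
  Adj x y := x ≠ y ∧ D.d x y ≠ δ
  symm := ⟨by
    rintro x y ⟨hxy, hd⟩
    exact ⟨hxy.symm, by rw [D.symm]; exact hd⟩⟩
  loopless := ⟨by rintro x ⟨h, -⟩; exact h rfl⟩

def Gle (D : Dissim X) (δ : ℝ) : SimpleGraph X where
  Adj x y := x ≠ y ∧ D.d x y ≤ δ
  symm := ⟨by
    rintro x y ⟨hxy, hd⟩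
    exact ⟨hxy.symm, by rw [D.symm]; exact hd⟩⟩
  loopless := ⟨by rintro x ⟨h, -⟩; exact h rfl⟩

def Glt (D : Dissim X) (δ : ℝ) : SimpleGraph X where
  Adj x y := x ≠ y ∧ D.d x y < δ
  symm := ⟨by
    rintro x y ⟨hxy, hd⟩
    exact ⟨hxy.symm, by rw [D.symm]; exact hd⟩⟩
  loopless := ⟨by rintro x ⟨h, -⟩; exact h rfl⟩

def IsCompOf {V : Type*} (G : SimpleGraph V) (C : Set V) : Prop :=
  ∃ x : V, C = {y | G.Reachable x y}

def MMax (D : Dissim X) : Set (Set X) :=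
  {M | IsMmodule D M ∧ M ≠ Set.univ ∧
    ∀ M' : Set X, IsMmodule D M' → M' ≠ Set.univ → M ⊆ M' → M = M'}

def IsPartition {α : Type*} (P : Set (Set α)) : Prop :=
  (∀ A ∈ P, A.Nonempty) ∧
  (∀ A ∈ P, ∀ B ∈ P, A ≠ B → Disjoint A B) ∧
  ⋃₀ P = Set.univ

def IsCopartition {α : Type*} (P : Set (Set α)) : Prop :=
  IsPartition ((fun M => Mᶜ) '' P)

def SimpleGraph.restrictTo {V : Type*} (G : SimpleGraph V) (S : Set V) : SimpleGraph V where
  Adj x y := x ∈ S ∧ y ∈ S ∧ G.Adj x y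
  symm := ⟨by rintro x y ⟨hx, hy, h⟩; exact ⟨hy, hx, h.symm⟩⟩
  loopless := ⟨by rintro x ⟨-, -, h⟩; exact G.loopless.1 x h⟩

def ConnectedWithin {V : Type*} (G : SimpleGraph V) (S : Set V) : Prop :=
  S.Nonempty ∧ ∀ x ∈ S, ∀ y ∈ S, (G.restrictTo S).Reachable x y

def IsCompWithin {V : Type*} (G : SimpleGraph V) (S : Set V) (C : Set V) : Prop :=
  ∃ x ∈ S, C = {y | (G.restrictTo S).Reachable x y}

def IsStrictTotalOrderOn {α : Type*} (S : Set α) (lt : α → α → Prop) : Prop :=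
  (∀ x ∈ S, ¬ lt x x) ∧
  (∀ x ∈ S, ∀ y ∈ S, ∀ z ∈ S, lt x y → lt y z → lt x z) ∧
  (∀ x ∈ S, ∀ y ∈ S, x ≠ y → (lt x y ∨ lt y x) ∧ ¬ (lt x y ∧ lt y x))

def CompatibleOn (D : Dissim X) (S : Set X) (lt : X → X → Prop) : Prop :=
  ∀ x ∈ S, ∀ y ∈ S, ∀ z ∈ S, lt x y → lt y z → D.d x y ≤ D.d x z ∧ D.d y z ≤ D.d x z

def IsCompatOrderOn (D : Dissim X) (S : Set X) (lt : X → X → Prop) : Prop :=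
  IsStrictTotalOrderOn S lt ∧ CompatibleOn D S lt

def FlatOn (D : Dissim X) (S : Set X) : Prop :=
  ∃ lt : X → X → Prop, IsCompatOrderOn D S lt ∧ (∃ x ∈ S, ∃ y ∈ S, lt x y) ∧
    ∀ lt' : X → X → Prop, IsCompatOrderOn D S lt' →
      (∀ x ∈ S, ∀ y ∈ S, (lt' x y ↔ lt x y)) ∨ (∀ x ∈ S, ∀ y ∈ S, (lt' x y ↔ lt y x))

def Flat (D : Dissim X) : Prop :=
  ∃ lt : X → X → Prop, IsCompatOrder D lt ∧ (∃ x y : X, lt x y) ∧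
    ∀ lt' : X → X → Prop, IsCompatOrder D lt' →
      (∀ x y : X, lt' x y ↔ lt x y) ∨ (∀ x y : X, lt' x y ↔ lt y x)

def IsCopointAt (D : Dissim X) (p : X) (C : Set X) : Prop :=
  IsMmodule D C ∧ C.Nonempty ∧ p ∉ C ∧
  ∀ C' : Set X, IsMmodule D C' → p ∉ C' → C ⊆ C' → C = C'

def bigGraph (D : Dissim X) (δ : ℝ) (I : Set (Set X)) : SimpleGraph (Set X) where
  Adj C C' := C ∈ I ∧ C' ∈ I ∧ C ≠ C' ∧ ∃ x ∈ C, ∃ y ∈ C', δ < D.d x y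
  symm := ⟨by
    rintro C C' ⟨hC, hC', hne, x, hx, y, hy, hd⟩
    exact ⟨hC', hC, hne.symm, y, hy, x, hx, by rw [D.symm]; exact hd⟩⟩
  loopless := ⟨by rintro C ⟨-, -, hne, -⟩; exact hne rfl⟩


section Stmt12Aux

lemma aux_comp_eq {D : Dissim X} {δ : ℝ} {C : Set X}
    (hC : IsCompOf (Gdelta D δ) C) {x : X} (hx : x ∈ C) :
    C = {y | (Gdelta D δ).Reachable x y} := by
  obtain ⟨x0, rfl⟩ := hC
  have hr : (Gdelta D δ).Reachable x0 x := hx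
  ext y
  exact ⟨fun h => hr.symm.trans h, fun h => hr.trans h⟩

lemma aux_comp_unique {D : Dissim X} {δ : ℝ} {C C' : Set X}
    (hC : IsCompOf (Gdelta D δ) C) (hC' : IsCompOf (Gdelta D δ) C')
    {x : X} (hx : x ∈ C) (hx' : x ∈ C') : C = C' := by
  rw [aux_comp_eq hC hx, aux_comp_eq hC' hx']

lemma aux_cross {D : Dissim X} {δ : ℝ} {C C' : Set X}
    (hC : IsCompOf (Gdelta D δ) C) (hC' : IsCompOf (Gdelta D δ) C')
    (hne : C ≠ C') {x y : X} (hx : x ∈ C) (hy : y ∈ C') :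
    x ≠ y ∧ D.d x y = δ := by
  have hxy : x ≠ y := by rintro rfl; exact hne (aux_comp_unique hC hC' hx hy)
  refine ⟨hxy, ?_⟩
  by_contra hd
  have hadj : (Gdelta D δ).Adj x y := ⟨hxy, hd⟩
  have hyC : y ∈ C := by rw [aux_comp_eq hC hx]; exact hadj.reachable
  exact hne (aux_comp_unique hC hC' hyC hy)

lemma aux_d_le [Fintype X] (D : Dissim X) {Y : Set X} {x y : X}
    (hx : x ∈ Y) (hy : y ∈ Y) : D.d x y ≤ diam D Y :=
  le_csSup (Set.Finite.bddAbove (Set.toFinite _)) (Set.mem_image2_of_mem hx hy)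

lemma aux_walk [Fintype X] {D : Dissim X} {δ : ℝ}
    (hdiam : ∀ C : Set X, IsCompOf (Gdelta D δ) C → diam D C ≤ δ)
    {lt : X → X → Prop} (hco : IsCompatOrder D lt)
    {C : Set X} (hC : IsCompOf (Gdelta D δ) C)
    {b : X} (hb : b ∉ C) :
    ∀ (a c : X), (Gdelta D δ).Walk a c → a ∈ C → lt a b → lt b c → False := by
  have hirr : ∀ x, ¬ lt x x := hco.1.irrefl
  have htr : ∀ x y z : X, lt x y → lt y z → lt x z := hco.1.trans
  intro a c w
  induction w with
  | nil => exact fun ha h1 h2 => hirr _ (htr _ _ _ h1 h2)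
  | @cons a a' c hadj p ih =>
    intro ha h1 h2
    have ha' : a' ∈ C := by rw [aux_comp_eq hC ha]; exact hadj.reachable
    rcases (haveI := hco.1; trichotomous (r := lt) a' b) with h | h | h
    · exact ih ha' h h2
    · exact hb (h ▸ ha')
    · have hcomp := hco.2 a b a' h1 h
      have hCb : IsCompOf (Gdelta D δ) {y | (Gdelta D δ).Reachable b y} := ⟨b, rfl⟩
      have hbmem : b ∈ {y | (Gdelta D δ).Reachable b y} := SimpleGraph.Reachable.refl b
      have hne : C ≠ {y | (Gdelta D δ).Reachable b y} := fun he => hb (he ▸ hbmem)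
      have hdb : D.d a b = δ := (aux_cross hC hCb hne ha hbmem).2
      have h1' : D.d a a' ≤ δ := (aux_d_le D ha ha').trans (hdiam C hC)
      have h2' : δ ≤ D.d a a' := hdb ▸ hcomp.1
      exact hadj.2 (le_antisymm h1' h2')

lemma aux_interval [Fintype X] {D : Dissim X} {δ : ℝ}
    (hdiam : ∀ C : Set X, IsCompOf (Gdelta D δ) C → diam D C ≤ δ)
    {lt : X → X → Prop} (hco : IsCompatOrder D lt)
    {C : Set X} (hC : IsCompOf (Gdelta D δ) C)
    {a b c : X} (ha : a ∈ C) (hc : c ∈ C) (hb : b ∉ C)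
    (h1 : lt a b) (h2 : lt b c) : False := by
  have hr : (Gdelta D δ).Reachable a c := by rw [aux_comp_eq hC ha] at hc; exact hc
  obtain ⟨w⟩ := hr
  exact aux_walk hdiam hco hC hb a c w ha h1 h2

lemma aux_uniform [Fintype X] {D : Dissim X} {δ : ℝ}
    (hdiam : ∀ C : Set X, IsCompOf (Gdelta D δ) C → diam D C ≤ δ)
    {lt : X → X → Prop} (hco : IsCompatOrder D lt)
    {C C' : Set X} (hC : IsCompOf (Gdelta D δ) C) (hC' : IsCompOf (Gdelta D δ) C')
    (hne : C ≠ C') {a b : X} (ha : a ∈ C) (hb : b ∈ C') (hab : lt a b) :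
    ∀ a' ∈ C, ∀ b' ∈ C', lt a' b' := by
  intro a' ha' b' hb'
  have hdisj : ∀ x, x ∈ C → x ∈ C' → False :=
    fun x h h' => hne (aux_comp_unique hC hC' h h')
  by_contra hnot
  have hne2 : a' ≠ b' := fun he => hdisj a' ha' (he ▸ hb')
  have hba : lt b' a' := by
    rcases (haveI := hco.1; trichotomous (r := lt) a' b') with h | h | h
    · exact absurd h hnot
    · exact absurd h hne2
    · exact h
  rcases (haveI := hco.1; trichotomous (r := lt) a' b) with h | h | h
  · exact aux_interval hdiam hco hC' hb' hb (fun hm => hdisj a' ha' hm) hba h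
  · exact hdisj b (h ▸ ha') hb
  · exact aux_interval hdiam hco hC ha ha' (fun hm => hdisj b hm hb) hab h

end Stmt12Aux

/-- in a non-connected Robinson space whose δ*-components all have
diameter at most δ*, the compatible orders are exactly the compositions of an
arbitrary order on the components with compatible orders of each component. -/
theorem stmt12 [Fintype X] [Nonempty X] (D : Dissim X)
    (hpos : ∀ x y : X, x ≠ y → 0 < D.d x y)
    (hRob : Robinson D)
    (δstar : ℝ)
    (hls : IsLeast {δ : ℝ | 0 < δ ∧ (Gle D δ).Connected} δstar)
    (hnc : ¬ (Gdelta D δstar).Connected)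
    (hdiam : ∀ C : Set X, IsCompOf (Gdelta D δstar) C → diam D C ≤ δstar)
    (lt : X → X → Prop) :
    IsCompatOrder D lt ↔
      ∃ (bigLt : Set X → Set X → Prop) (ltP : Set X → X → X → Prop),
        IsStrictTotalOrderOn {C : Set X | IsCompOf (Gdelta D δstar) C} bigLt ∧
        (∀ C : Set X, IsCompOf (Gdelta D δstar) C → IsCompatOrderOn D C (ltP C)) ∧
        (∀ x y : X, lt x y ↔
          ((∃ C : Set X, IsCompOf (Gdelta D δstar) C ∧ x ∈ C ∧ y ∈ C ∧ ltP C x y) ∨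
           (∃ C C' : Set X, IsCompOf (Gdelta D δstar) C ∧
              IsCompOf (Gdelta D δstar) C' ∧ C ≠ C' ∧
              x ∈ C ∧ y ∈ C' ∧ bigLt C C'))) := by
  constructor
  · -- compatible order → composition
    intro hco
    have hirr : ∀ x, ¬ lt x x := hco.1.irrefl
    have htr : ∀ x y z : X, lt x y → lt y z → lt x z := hco.1.trans
    have htri : ∀ x y : X, lt x y ∨ x = y ∨ lt y x := (haveI := hco.1; trichotomous (r := lt))
    refine ⟨fun C C' => C ≠ C' ∧ ∃ x ∈ C, ∃ y ∈ C', lt x y, fun _ => lt, ?_, ?_, ?_⟩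
    · refine ⟨fun C _ h => h.1 rfl, ?_, ?_⟩
      · rintro C hC C' hC' C'' hC'' ⟨hne1, x, hx, y, hy, hxy⟩ ⟨hne2, u, hu, v, hv, huv⟩
        have h1 := aux_uniform hdiam hco hC hC' hne1 hx hy hxy
        have h2 := aux_uniform hdiam hco hC' hC'' hne2 hu hv huv
        have hne3 : C ≠ C'' := by
          rintro rfl
          exact hirr y (htr y v y (h2 y hy v hv) (h1 v hv y hy))
        exact ⟨hne3, x, hx, v, hv, htr x y v (h1 x hx y hy) (h2 y hy v hv)⟩
      · intro C hC C' hC' hne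
        obtain ⟨x0, rfl⟩ := hC
        obtain ⟨y0, rfl⟩ := hC'
        have hx0 : x0 ∈ {y | (Gdelta D δstar).Reachable x0 y} := SimpleGraph.Reachable.refl x0
        have hy0 : y0 ∈ {y | (Gdelta D δstar).Reachable y0 y} := SimpleGraph.Reachable.refl y0
        constructor
        · rcases htri x0 y0 with h | h | h
          · exact Or.inl ⟨hne, x0, hx0, y0, hy0, h⟩
          · exact absurd (aux_comp_unique ⟨x0, rfl⟩ ⟨y0, rfl⟩ hx0 (h ▸ hy0)) hne
          · exact Or.inr ⟨hne.symm, y0, hy0, x0, hx0, h⟩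
        · rintro ⟨⟨_, x, hx, y, hy, hxy⟩, ⟨_, u, hu, v, hv, huv⟩⟩
          have h1 := aux_uniform hdiam hco ⟨x0, rfl⟩ ⟨y0, rfl⟩ hne hx hy hxy
          exact hirr u (htr u v u huv (h1 v hv u hu))
    · intro C hC
      have hdisj : ∀ x ∈ C, ¬ lt x x := fun x _ => hirr x
      refine ⟨⟨hdisj, fun x _ y _ z _ => htr x y z, ?_⟩, fun x _ y _ z _ h1 h2 => hco.2 x y z h1 h2⟩
      intro x hx y hy hne
      constructor
      · rcases htri x y with h | h | h
        · exact Or.inl h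
        · exact absurd h hne
        · exact Or.inr h
      · rintro ⟨h1, h2⟩; exact hirr x (htr x y x h1 h2)
    · intro x y
      constructor
      · intro h
        have hKx : IsCompOf (Gdelta D δstar) {z | (Gdelta D δstar).Reachable x z} := ⟨x, rfl⟩
        have hKy : IsCompOf (Gdelta D δstar) {z | (Gdelta D δstar).Reachable y z} := ⟨y, rfl⟩
        have hx : x ∈ {z | (Gdelta D δstar).Reachable x z} := SimpleGraph.Reachable.refl x
        have hy : y ∈ {z | (Gdelta D δstar).Reachable y z} := SimpleGraph.Reachable.refl y
        by_cases he : {z | (Gdelta D δstar).Reachable x z} = {z | (Gdelta D δstar).Reachable y z}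
        · exact Or.inl ⟨_, hKx, hx, he ▸ hy, h⟩
        · exact Or.inr ⟨_, _, hKx, hKy, he, hx, hy, he, x, hx, y, hy, h⟩
      · rintro (⟨C, hC, hx, hy, h⟩ | ⟨C, C', hC, hC', hne, hx, hy, _, u, hu, v, hv, huv⟩)
        · exact h
        · exact aux_uniform hdiam hco hC hC' hne hu hv huv x hx y hy
  · -- composition → compatible order
    rintro ⟨bigLt, ltP, hSTO, hcomp, hiff⟩
    have hKc : ∀ x : X, IsCompOf (Gdelta D δstar) {z | (Gdelta D δstar).Reachable x z} :=
      fun x => ⟨x, rfl⟩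
    set K : X → Set X := fun x => {z | (Gdelta D δstar).Reachable x z} with hKdef
    have hmem : ∀ x, x ∈ K x := fun x => SimpleGraph.Reachable.refl x
    have hKmem : ∀ x, K x ∈ {C : Set X | IsCompOf (Gdelta D δstar) C} := fun x => hKc x
    have huniq : ∀ {C : Set X} {x : X}, IsCompOf (Gdelta D δstar) C → x ∈ C → C = K x :=
      fun hC hx => aux_comp_eq hC hx
    have key : ∀ x y : X, lt x y →
        (K x = K y ∧ ltP (K x) x y) ∨ (K x ≠ K y ∧ bigLt (K x) (K y)) := by
      intro x y h
      rcases (hiff x y).1 h with ⟨C, hC, hx, hy, hl⟩ | ⟨C, C', hC, hC', hne, hx, hy, hb⟩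
      · have e1 := huniq hC hx; have e2 := huniq hC hy
        exact Or.inl ⟨e1.symm.trans e2, e1 ▸ hl⟩
      · have e1 := huniq hC hx; have e2 := huniq hC' hy
        exact Or.inr ⟨by rw [← e1, ← e2]; exact hne, by rw [← e1, ← e2]; exact hb⟩
    have hmkL : ∀ x y : X, ltP (K x) x y → y ∈ K x → lt x y := by
      intro x y hl hy
      exact (hiff x y).2 (Or.inl ⟨K x, hKc x, hmem x, hy, hl⟩)
    have hmkR : ∀ x y : X, K x ≠ K y → bigLt (K x) (K y) → lt x y := by
      intro x y hne hb
      exact (hiff x y).2 (Or.inr ⟨K x, K y, hKc x, hKc y, hne, hmem x, hmem y, hb⟩)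
    have hbig_asymm : ∀ x y : X, K x ≠ K y → bigLt (K x) (K y) → bigLt (K y) (K x) → False := by
      intro x y hne h1 h2
      exact ((hSTO.2.2 (K x) (hKmem x) (K y) (hKmem y) hne).2) ⟨h1, h2⟩
    have hPirr : ∀ x : X, ¬ ltP (K x) x x := fun x => (hcomp (K x) (hKc x)).1.1 x (hmem x)
    have hirr : ∀ x : X, ¬ lt x x := by
      intro x h
      rcases key x x h with ⟨_, hl⟩ | ⟨hne, _⟩
      · exact hPirr x hl
      · exact hne rfl
    have htrans : ∀ x y z : X, lt x y → lt y z → lt x z := by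
      intro x y z h1 h2
      rcases key x y h1 with ⟨e1, hl1⟩ | ⟨n1, hb1⟩ <;>
        rcases key y z h2 with ⟨e2, hl2⟩ | ⟨n2, hb2⟩
      · -- same component all around
        have hyK : y ∈ K x := e1 ▸ hmem y
        have hzK : z ∈ K x := (e1.trans e2) ▸ hmem z
        have hl2' : ltP (K x) y z := e1 ▸ hl2
        exact hmkL x z ((hcomp (K x) (hKc x)).1.2.1 x (hmem x) y hyK z hzK hl1 hl2') hzK
      · exact hmkR x z (e1 ▸ n2) (e1 ▸ hb2)
      · exact hmkR x z (e2 ▸ n1) (e2 ▸ hb1)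
      · have hne3 : K x ≠ K z := by
          intro he
          exact hbig_asymm y z n2 hb2 (he ▸ hb1)
        refine hmkR x z hne3 ?_
        exact hSTO.2.1 (K x) (hKmem x) (K y) (hKmem y) (K z) (hKmem z) hb1 hb2
    have htri : ∀ x y : X, lt x y ∨ x = y ∨ lt y x := by
      intro x y
      by_cases hxy : x = y
      · exact Or.inr (Or.inl hxy)
      by_cases he : K x = K y
      · have hyK : y ∈ K x := he ▸ hmem y
        rcases ((hcomp (K x) (hKc x)).1.2.2 x (hmem x) y hyK hxy).1 with h | h
        · exact Or.inl (hmkL x y h hyK)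
        · refine Or.inr (Or.inr (hmkL y x (he ▸ h) (he ▸ hmem x)))
      · rcases (hSTO.2.2 (K x) (hKmem x) (K y) (hKmem y) he).1 with h | h
        · exact Or.inl (hmkR x y he h)
        · exact Or.inr (Or.inr (hmkR y x (Ne.symm he) h))
    refine ⟨{ trichotomous := fun a b h1 h2 => (htri a b).elim (fun h => absurd h h1) (fun h => h.elim id (fun h => absurd h h2)), irrefl := hirr, trans := htrans }, ?_⟩
    intro x y z h1 h2
    have hdle : ∀ u v : X, v ∈ K u → D.d u v ≤ δstar :=
      fun u v hv => (aux_d_le D (hmem u) hv).trans (hdiam (K u) (hKc u))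
    have hcross : ∀ u v : X, K u ≠ K v → D.d u v = δstar :=
      fun u v hne => (aux_cross (hKc u) (hKc v) hne (hmem u) (hmem v)).2
    rcases key x y h1 with ⟨e1, hl1⟩ | ⟨n1, hb1⟩ <;>
      rcases key y z h2 with ⟨e2, hl2⟩ | ⟨n2, hb2⟩
    · have hyK : y ∈ K x := e1 ▸ hmem y
      have hzK : z ∈ K x := (e1.trans e2) ▸ hmem z
      have hl2' : ltP (K x) y z := e1 ▸ hl2
      exact (hcomp (K x) (hKc x)).2 x (hmem x) y hyK z hzK hl1 hl2'
    · have n3 : K x ≠ K z := e1 ▸ n2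
      have d1 : D.d x z = δstar := hcross x z n3
      have d2 : D.d y z = δstar := hcross y z n2
      have d3 : D.d x y ≤ δstar := hdle x y (e1 ▸ hmem y)
      constructor <;> rw [d1]
      · exact d3
      · exact le_of_eq d2
    · have n3 : K x ≠ K z := e2 ▸ n1
      have d1 : D.d x z = δstar := hcross x z n3
      have d2 : D.d x y = δstar := hcross x y n1
      have d3 : D.d y z ≤ δstar := hdle y z (e2 ▸ hmem z)
      constructor <;> rw [d1]
      · exact le_of_eq d2
      · exact d3
    · have n3 : K x ≠ K z := by
        intro he
        exact hbig_asymm y z n2 hb2 (he ▸ hb1)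
      have d1 : D.d x z = δstar := hcross x z n3
      have d2 : D.d x y = δstar := hcross x y n1
      have d3 : D.d y z = δstar := hcross y z n2
      rw [d1, d2, d3]
      exact ⟨le_refl _, le_refl _⟩
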